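/- Let n, r be positive integers with r ≤ n and let β > 0. Suppose the set {0,1}^n × {y ∈ {0,1}^n : |y| ≤ r} is partitioned into t combinatorial rectangles R_1, …, R_t (each R_i = A_i × B_i with A_i ⊆ {0,1}^n and B_i ⊆ {y : |y| ≤ r}), each rectangle R_i carrying a label a_i ∈ {0,1}, and that the number of pairs (x,y) whose rectangle's label equals x·y mod 2 is at least (1/2 + β) · 2^n · B(n,r). Then t ≥ (2β)^2 · B(n,r). In particular, if t ≤ 2^c then c ≥ log₂ B(n,r) − 2 log₂(1/(2β)). -/

import Mathlib

/-- Hamming weight of a bit string. -/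
def wt {n : ℕ} (y : Fin n → Bool) : ℕ := (Finset.univ.filter (fun i => y i = true)).card

/-- Inner product mod 2 of two bit strings, as an element of `ZMod 2`. -/
def ip {n : ℕ} (x y : Fin n → Bool) : ZMod 2 := ∑ i, if x i && y i then 1 else 0

noncomputable def chi (a : ZMod 2) : ℝ := if a = 0 then 1 else -1

lemma chi_add (a b : ZMod 2) : chi (a + b) = chi a * chi b := by
  unfold chi; fin_cases a <;> fin_cases b <;> simp <;> split_ifs <;> simp_all <;> contradiction

lemma chi_abs (a : ZMod 2) : |chi a| = 1 := by
  unfold chi; split <;> simp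

lemma chi_mul_chi (a b : ZMod 2) : chi a * chi b = if a = b then 1 else -1 := by
  unfold chi; fin_cases a <;> fin_cases b <;> simp <;> split_ifs <;> simp_all <;> contradiction

lemma chi_sum {ι : Type*} (s : Finset ι) (f : ι → ZMod 2) :
    chi (∑ i ∈ s, f i) = ∏ i ∈ s, chi (f i) := by
  induction s using Finset.cons_induction with
  | empty => simp [chi]
  | cons a s ha ih => rw [Finset.sum_cons, Finset.prod_cons, chi_add, ih]

lemma bool_aux (p q r : Bool) :
    ((if (p && q) = true then (1 : ZMod 2) else 0) + if (p && r) = true then 1 else 0) =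
      if (p && (xor q r)) = true then 1 else 0 := by revert p q r; decide

lemma ip_add {n : ℕ} (x y y' : Fin n → Bool) :
    ip x y + ip x y' = ip x (fun i => xor (y i) (y' i)) := by
  simp only [ip, ← Finset.sum_add_distrib]
  apply Finset.sum_congr rfl
  intro i _
  exact bool_aux (x i) (y i) (y' i)

lemma chi_ip_prod {n : ℕ} (x z : Fin n → Bool) :
    chi (ip x z) = ∏ i, (if x i && z i then (-1 : ℝ) else 1) := by
  rw [ip, chi_sum]
  apply Finset.prod_congr rfl
  intro i _
  cases x i <;> cases z i <;> simp [chi] <;> decide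

lemma sum_chi_ip {n : ℕ} (z : Fin n → Bool) :
    ∑ x : Fin n → Bool, chi (ip x z) = if z = (fun _ => false) then (2 : ℝ) ^ n else 0 := by
  simp only [chi_ip_prod]
  have h := Finset.prod_univ_sum (fun _ : Fin n => (Finset.univ : Finset Bool))
      (fun i b => if b && z i then (-1 : ℝ) else 1)
  rw [Fintype.piFinset_univ] at h
  rw [← h]
  by_cases hz : z = (fun _ => false)
  · subst hz; simp
  · simp only [if_neg hz]
    obtain ⟨j, hj⟩ : ∃ j, z j = true := by
      by_contra hc
      push_neg at hc
      exact hz (funext fun i => by simpa using hc i)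
    apply Finset.prod_eq_zero (Finset.mem_univ j)
    simp [hj]

lemma orth {n : ℕ} (y y' : Fin n → Bool) :
    ∑ x : Fin n → Bool, chi (ip x y) * chi (ip x y') =
      if y = y' then (2 : ℝ) ^ n else 0 := by
  have : ∀ x : Fin n → Bool, chi (ip x y) * chi (ip x y') =
      chi (ip x (fun i => xor (y i) (y' i))) := by
    intro x; rw [← chi_add, ip_add]
  simp only [this, sum_chi_ip]
  congr 1
  simp only [eq_iff_iff]
  constructor
  · intro h
    funext i
    have := congrFun h i
    cases hy : y i <;> cases hy' : y' i <;> simp_all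
  · rintro rfl; funext i; simp

lemma lindsey {n : ℕ} (A B : Finset (Fin n → Bool)) :
    |∑ x ∈ A, ∑ y ∈ B, chi (ip x y)| ≤
      Real.sqrt (2 ^ n * A.card * B.card) := by
  set f : (Fin n → Bool) → ℝ := fun x => ∑ y ∈ B, chi (ip x y) with hf
  have key : ∑ x : Fin n → Bool, (f x) ^ 2 = (B.card : ℝ) * 2 ^ n := by
    have h1 : ∀ x, (f x) ^ 2 = ∑ y ∈ B, ∑ y' ∈ B, chi (ip x y) * chi (ip x y') := by
      intro x; rw [sq, hf]; exact Finset.sum_mul_sum B B _ _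
    simp only [h1]
    rw [Finset.sum_comm]
    have h2 : ∀ y ∈ B, ∑ x : Fin n → Bool, ∑ y' ∈ B, chi (ip x y) * chi (ip x y')
        = (2:ℝ)^n := by
      intro y hy
      rw [Finset.sum_comm]
      have : ∀ y' ∈ B, ∑ x : Fin n → Bool, chi (ip x y) * chi (ip x y')
          = if y = y' then (2:ℝ)^n else 0 := fun y' _ => orth y y'
      rw [Finset.sum_congr rfl this]
      simp [Finset.sum_ite_eq, hy]
    rw [Finset.sum_congr rfl h2, Finset.sum_const, nsmul_eq_mul]
  have hcs : (∑ x ∈ A, f x) ^ 2 ≤ (∑ x ∈ A, (1:ℝ) ^ 2) * (∑ x ∈ A, (f x) ^ 2) := by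
    have := Finset.sum_mul_sq_le_sq_mul_sq A (fun _ => (1:ℝ)) f
    simpa using this
  have hle : (∑ x ∈ A, (f x) ^ 2) ≤ ∑ x : Fin n → Bool, (f x) ^ 2 := by
    apply Finset.sum_le_sum_of_subset_of_nonneg (Finset.subset_univ A)
    intros; positivity
  have hsq : (∑ x ∈ A, f x) ^ 2 ≤ 2 ^ n * A.card * B.card := by
    calc (∑ x ∈ A, f x) ^ 2 ≤ (∑ x ∈ A, (1:ℝ)^2) * (∑ x ∈ A, (f x)^2) := hcs
    _ ≤ (A.card : ℝ) * ((B.card : ℝ) * 2 ^ n) := by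
        simp only [one_pow, Finset.sum_const, nsmul_eq_mul, mul_one]
        exact mul_le_mul_of_nonneg_left (le_of_le_of_eq hle key) (by positivity)
    _ = 2 ^ n * A.card * B.card := by ring
  calc |∑ x ∈ A, ∑ y ∈ B, chi (ip x y)| = Real.sqrt ((∑ x ∈ A, f x) ^ 2) := by
        rw [Real.sqrt_sq_eq_abs]
  _ ≤ Real.sqrt (2 ^ n * A.card * B.card) := Real.sqrt_le_sqrt hsq

lemma card_wt_le (n r : ℕ) :
    (Finset.univ.filter (fun y : Fin n → Bool => wt y ≤ r)).card =
      ∑ k ∈ Finset.range (r + 1), n.choose k := by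
  have e : (Finset.univ.filter (fun y : Fin n → Bool => wt y ≤ r)).card =
      (Finset.univ.filter (fun s : Finset (Fin n) => s.card ≤ r)).card := by
    apply Finset.card_nbij' (i := fun y => Finset.univ.filter (fun i => y i = true))
      (j := fun s => fun i => decide (i ∈ s))
    · intro y hy
      simp only [Finset.coe_filter, Set.mem_setOf_eq, Finset.mem_filter, Finset.mem_univ, true_and] at hy ⊢
      exact hy
    · intro s hs
      simp only [Finset.coe_filter, Set.mem_setOf_eq, Finset.mem_filter, Finset.mem_univ, true_and] at hs ⊢
      unfold wt
      convert hs using 2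
      ext i; simp
    · intro y _
      funext i; simp
    · intro s _
      ext i; simp
  rw [e]
  have e2 : (Finset.univ.filter (fun s : Finset (Fin n) => s.card ≤ r)) =
      (Finset.range (r + 1)).biUnion (fun k => Finset.powersetCard k Finset.univ) := by
    ext s
    simp [Finset.mem_powersetCard_univ, Finset.mem_biUnion, Nat.lt_succ_iff]
  rw [e2, Finset.card_biUnion]
  · apply Finset.sum_congr rfl
    intro k _
    rw [Finset.card_powersetCard, Finset.card_univ, Fintype.card_fin]
  · intro k _ l _ hkl
    simp only [Finset.disjoint_left, Finset.mem_powersetCard_univ]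
    intro s h1 h2
    exact hkl (h1 ▸ h2 ▸ rfl)

set_option maxHeartbeats 2000000 in
/-- If `{0,1}^n × {y : |y| ≤ r}` is partitioned into `t` labeled combinatorial
rectangles `A i × B i` with labels `a i ∈ ZMod 2`, and the number of pairs `(x,y)` whose
rectangle's label equals `x·y mod 2` is at least `(1/2 + β)·2^n·B(n,r)`, then
`t ≥ (2β)²·B(n,r)`; in particular, if `t ≤ 2^c` then
`c ≥ log₂ B(n,r) − 2·log₂(1/(2β))`. -/
theorem rectangle_partition_lower_bound (n r t : ℕ) (hn : 0 < n) (hr : 0 < r) (hrn : r ≤ n)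
    (ht : 0 < t) (β : ℝ) (hβ : 0 < β)
    (A B : Fin t → Finset (Fin n → Bool)) (a : Fin t → ZMod 2)
    (hB : ∀ i, ∀ y ∈ B i, wt y ≤ r)
    (hpart : ∀ x y : Fin n → Bool, wt y ≤ r → ∃! i : Fin t, x ∈ A i ∧ y ∈ B i)
    (hsucc : ((1 : ℝ) / 2 + β) * 2 ^ n * (∑ i ∈ Finset.range (r + 1), (n.choose i : ℝ)) ≤
      (((Finset.univ ×ˢ Finset.univ.filter (fun y : Fin n → Bool => wt y ≤ r)).filter
          (fun xy => ∃ i, xy.1 ∈ A i ∧ xy.2 ∈ B i ∧ a i = ip xy.1 xy.2)).card : ℝ)) :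
    (2 * β) ^ 2 * (∑ i ∈ Finset.range (r + 1), (n.choose i : ℝ)) ≤ (t : ℝ) ∧
    ∀ c : ℝ, (t : ℝ) ≤ 2 ^ c →
      Real.logb 2 (∑ i ∈ Finset.range (r + 1), (n.choose i : ℝ)) -
        2 * Real.logb 2 (1 / (2 * β)) ≤ c := by
  classical
  set D : Finset ((Fin n → Bool) × (Fin n → Bool)) :=
    Finset.univ ×ˢ Finset.univ.filter (fun y : Fin n → Bool => wt y ≤ r) with hD
  set pred : (Fin n → Bool) × (Fin n → Bool) → Prop :=
    fun xy => ∃ i, xy.1 ∈ A i ∧ xy.2 ∈ B i ∧ a i = ip xy.1 xy.2 with hpred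
  set Bs : ℝ := ∑ i ∈ Finset.range (r + 1), (n.choose i : ℝ) with hBs
  have hBsnat : ((∑ k ∈ Finset.range (r + 1), n.choose k : ℕ) : ℝ) = Bs := by
    rw [hBs]; push_cast; rfl
  have hBspos : 0 < Bs := by
    rw [hBs]
    apply Finset.sum_pos
    · intro k hk
      have : k ≤ n := le_trans (Nat.lt_succ_iff.mp (Finset.mem_range.mp hk)) hrn
      exact_mod_cast Nat.choose_pos this
    · exact ⟨0, Finset.mem_range.mpr (Nat.succ_pos r)⟩
  -- cardinality of the domain
  have hDnat : D.card = 2 ^ n * ∑ k ∈ Finset.range (r + 1), n.choose k := by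
    rw [hD, Finset.card_product, card_wt_le, Finset.card_univ]
    congr 1
    simp [Fintype.card_fun]
  have hDcard : (D.card : ℝ) = 2 ^ n * Bs := by
    rw [hDnat, Nat.cast_mul, Nat.cast_pow, hBsnat]
    norm_num
  -- rectangles live inside D
  have hsub : ∀ i : Fin t, (A i ×ˢ B i) ⊆ D := by
    intro i p hp
    rw [Finset.mem_product] at hp
    rw [hD, Finset.mem_product]
    exact ⟨Finset.mem_univ _, Finset.mem_filter.mpr ⟨Finset.mem_univ _, hB i _ hp.2⟩⟩
  have hfilter : ∀ i : Fin t,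
      D.filter (fun p => p.1 ∈ A i ∧ p.2 ∈ B i) = A i ×ˢ B i := by
    intro i
    ext p
    simp only [Finset.mem_filter, Finset.mem_product]
    constructor
    · rintro ⟨_, h⟩; exact h
    · intro h
      exact ⟨hsub i (Finset.mem_product.mpr h), h⟩
  -- unique rectangle containing each point of D
  have huniq : ∀ p ∈ D, ∃! i : Fin t, p.1 ∈ A i ∧ p.2 ∈ B i := by
    intro p hp
    rw [hD, Finset.mem_product, Finset.mem_filter] at hp
    exact hpart p.1 p.2 hp.2.2
  have hsingle : ∀ p ∈ D, ∀ i₀ : Fin t, (p.1 ∈ A i₀ ∧ p.2 ∈ B i₀) →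
      (Finset.univ.filter (fun i : Fin t => p.1 ∈ A i ∧ p.2 ∈ B i)) = {i₀} := by
    intro p hp i₀ hi₀
    obtain ⟨j, hj, hju⟩ := huniq p hp
    ext i
    simp only [Finset.mem_filter, Finset.mem_univ, true_and, Finset.mem_singleton]
    constructor
    · intro h; rw [hju i h, hju i₀ hi₀]
    · rintro rfl; exact hi₀
  -- total area of rectangles = |D|
  have hcount : ∑ i : Fin t, ((A i).card * (B i).card) = D.card := by
    have step1 : ∀ i : Fin t, (A i).card * (B i).card =
        ∑ p ∈ D, (if p.1 ∈ A i ∧ p.2 ∈ B i then 1 else 0) := by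
      intro i
      rw [← Finset.card_product, ← hfilter i, Finset.card_filter]
    simp only [step1]
    rw [Finset.sum_comm]
    have step2 : ∀ p ∈ D, ∑ i : Fin t, (if p.1 ∈ A i ∧ p.2 ∈ B i then 1 else 0) = 1 := by
      intro p hp
      obtain ⟨j, hj, _⟩ := huniq p hp
      rw [← Finset.card_filter, hsingle p hp j hj, Finset.card_singleton]
    rw [Finset.sum_congr rfl step2, Finset.sum_const, smul_eq_mul, mul_one]
  -- the signed sum over rectangles
  set S : Fin t → ℝ := fun i => ∑ x ∈ A i, ∑ y ∈ B i, chi (ip x y) with hS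
  have hiden : ∑ i : Fin t, chi (a i) * S i =
      ∑ p ∈ D, (if pred p then (1 : ℝ) else -1) := by
    have e1 : ∀ i : Fin t, chi (a i) * S i =
        ∑ p ∈ D, (if p.1 ∈ A i ∧ p.2 ∈ B i then chi (a i) * chi (ip p.1 p.2) else 0) := by
      intro i
      rw [← Finset.sum_filter, hfilter i, hS]
      rw [Finset.mul_sum, Finset.sum_product]
      simp only [Finset.mul_sum]
    simp only [e1]
    rw [Finset.sum_comm]
    apply Finset.sum_congr rfl
    intro p hp
    obtain ⟨j, hj, hju⟩ := huniq p hp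
    rw [Finset.sum_eq_single j]
    · rw [if_pos hj, chi_mul_chi]
      congr 1
      simp only [eq_iff_iff, hpred]
      constructor
      · intro h; exact ⟨j, hj.1, hj.2, h⟩
      · rintro ⟨i, hi1, hi2, hi3⟩
        rwa [hju i ⟨hi1, hi2⟩] at hi3
    · intro i _ hij
      rw [if_neg]
      intro h
      exact hij (hju i h)
    · intro h; exact absurd (Finset.mem_univ j) h
  -- evaluate the signed sum via the success count
  set Nc : ℕ := (D.filter pred).card with hNc
  have hsplit : ∑ p ∈ D, (if pred p then (1 : ℝ) else -1) = 2 * Nc - D.card := by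
    rw [Finset.sum_ite, Finset.sum_const, Finset.sum_const]
    have := Finset.card_filter_add_card_filter_not (s := D) (p := pred)
    have hcd : ((D.filter (fun p => ¬ pred p)).card : ℝ) = (D.card : ℝ) - Nc := by
      rw [hNc]
      have : ((D.filter pred).card : ℝ) + ((D.filter (fun p => ¬ pred p)).card : ℝ)
          = (D.card : ℝ) := by exact_mod_cast this
      linarith
    simp only [nsmul_eq_mul, mul_one, mul_neg_one]
    rw [hcd, hNc]
    ring
  -- advantage lower bound
  have hadv : 2 * β * (2 ^ n * Bs) ≤ ∑ i : Fin t, chi (a i) * S i := by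
    rw [hiden, hsplit]
    have h1 : ((1 : ℝ) / 2 + β) * 2 ^ n * Bs ≤ (Nc : ℝ) := hsucc
    rw [hDcard]
    nlinarith [h1]
  -- upper bound via Lindsey + Cauchy-Schwarz
  have habs : ∑ i : Fin t, chi (a i) * S i ≤
      ∑ i : Fin t, Real.sqrt (2 ^ n * (A i).card * (B i).card) := by
    apply Finset.sum_le_sum
    intro i _
    calc chi (a i) * S i ≤ |chi (a i) * S i| := le_abs_self _
    _ = |S i| := by rw [abs_mul, chi_abs, one_mul]
    _ ≤ Real.sqrt (2 ^ n * (A i).card * (B i).card) := lindsey (A i) (B i)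
  have hcs2 : ∑ i : Fin t, Real.sqrt (2 ^ n * (A i).card * (B i).card) ≤
      Real.sqrt ((t : ℝ) * (2 ^ n * (2 ^ n * Bs))) := by
    set u : Fin t → ℝ := fun i => 2 ^ n * (A i).card * (B i).card with hu
    have hunn : ∀ i, 0 ≤ u i := by intro i; rw [hu]; positivity
    have hsum_u : ∑ i : Fin t, u i = 2 ^ n * (2 ^ n * Bs) := by
      rw [hu]
      have : ∑ i : Fin t, (2:ℝ) ^ n * (A i).card * (B i).card
          = 2 ^ n * ∑ i : Fin t, ((A i).card : ℝ) * (B i).card := by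
        rw [Finset.mul_sum]; apply Finset.sum_congr rfl; intros; ring
      rw [this]
      have : ∑ i : Fin t, ((A i).card : ℝ) * ((B i).card : ℝ) = (D.card : ℝ) := by
        rw [← hcount]; push_cast; rfl
      rw [this, hDcard]
    have h1 : (∑ i : Fin t, Real.sqrt (u i)) ^ 2 ≤
        (∑ i : Fin t, (1:ℝ)^2) * (∑ i : Fin t, (Real.sqrt (u i))^2) := by
      have := Finset.sum_mul_sq_le_sq_mul_sq Finset.univ (fun _ : Fin t => (1:ℝ))
        (fun i => Real.sqrt (u i))
      simpa using this
    have h2 : (∑ i : Fin t, Real.sqrt (u i)) ^ 2 ≤ (t : ℝ) * (2 ^ n * (2 ^ n * Bs)) := by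
      calc (∑ i : Fin t, Real.sqrt (u i)) ^ 2
          ≤ (∑ i : Fin t, (1:ℝ)^2) * (∑ i : Fin t, (Real.sqrt (u i))^2) := h1
      _ = (t : ℝ) * (∑ i : Fin t, u i) := by
          simp only [one_pow, Finset.sum_const, Finset.card_univ, Fintype.card_fin,
            nsmul_eq_mul, mul_one]
          congr 1
          apply Finset.sum_congr rfl
          intro i _
          exact Real.sq_sqrt (hunn i)
      _ = (t : ℝ) * (2 ^ n * (2 ^ n * Bs)) := by rw [hsum_u]
    calc ∑ i : Fin t, Real.sqrt (u i)
        = Real.sqrt ((∑ i : Fin t, Real.sqrt (u i)) ^ 2) := by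
          rw [Real.sqrt_sq (Finset.sum_nonneg (fun i _ => Real.sqrt_nonneg _))]
    _ ≤ Real.sqrt ((t : ℝ) * (2 ^ n * (2 ^ n * Bs))) := Real.sqrt_le_sqrt h2
  -- the main quantitative bound
  have hmain : (2 * β) ^ 2 * Bs ≤ (t : ℝ) := by
    have hchain : 2 * β * (2 ^ n * Bs) ≤ Real.sqrt ((t : ℝ) * (2 ^ n * (2 ^ n * Bs))) :=
      le_trans hadv (le_trans habs hcs2)
    have hlhs : 0 ≤ 2 * β * (2 ^ n * Bs) := by positivity
    have h2 : (2 * β * (2 ^ n * Bs)) ^ 2 ≤ (t : ℝ) * (2 ^ n * (2 ^ n * Bs)) := by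
      calc (2 * β * (2 ^ n * Bs)) ^ 2
          ≤ Real.sqrt ((t : ℝ) * (2 ^ n * (2 ^ n * Bs))) ^ 2 :=
            pow_le_pow_left₀ hlhs hchain 2
      _ = (t : ℝ) * (2 ^ n * (2 ^ n * Bs)) := Real.sq_sqrt (by positivity)
    have hc : (0:ℝ) < ((2:ℝ) ^ n) ^ 2 * Bs := by positivity
    have h3 : ((2 * β) ^ 2 * Bs) * (((2:ℝ) ^ n) ^ 2 * Bs) ≤ (t : ℝ) * (((2:ℝ) ^ n) ^ 2 * Bs) := by
      calc ((2 * β) ^ 2 * Bs) * (((2:ℝ) ^ n) ^ 2 * Bs) = (2 * β * (2 ^ n * Bs)) ^ 2 := by ring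
      _ ≤ (t : ℝ) * (2 ^ n * (2 ^ n * Bs)) := h2
      _ = (t : ℝ) * (((2:ℝ) ^ n) ^ 2 * Bs) := by ring
    exact le_of_mul_le_mul_right h3 hc
  refine ⟨hmain, ?_⟩
  intro c hc
  have h2b : (0:ℝ) < 2 * β := by linarith
  have hup : (2 * β) ^ 2 * Bs ≤ (2:ℝ) ^ c := le_trans hmain hc
  have hlog : Real.logb 2 ((2 * β) ^ 2 * Bs) ≤ Real.logb 2 ((2:ℝ) ^ c) :=
    (Real.logb_le_logb (by norm_num) (by positivity) (by positivity)).mpr hup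
  rw [Real.logb_rpow (by norm_num) (by norm_num)] at hlog
  calc Real.logb 2 Bs - 2 * Real.logb 2 (1 / (2 * β))
      = Real.logb 2 ((2 * β) ^ 2 * Bs) := by
        rw [Real.logb_mul (by positivity) (ne_of_gt hBspos), Real.logb_pow,
          one_div, Real.logb_inv]
        ring
  _ ≤ c := hlog
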